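/- For every real δ > 0, the integral β′ = ∫₀^δ ϖ_l(z) dz, where ϖ_l(z) = (∫_{{ξ∈ℝ² : ‖ξ‖≤δ, ξ₂≥z}} ‖ξ‖² dξ)/(∫_{{ξ∈ℝ² : ‖ξ‖≤δ}} ‖ξ‖² dξ), equals 4δ/(5π). -/

import Mathlib

open MeasureTheory Real Set

lemma r_int (δ : ℝ) (hδ : 0 < δ) (n : ℕ) :
    ∫ r in Ioi (0:ℝ), Set.indicator (Iic δ) (fun r => r ^ n) r
      = δ ^ (n+1) / (n+1) := by
  rw [integral_indicator measurableSet_Iic, Measure.restrict_restrict measurableSet_Iic,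
    Set.Iic_inter_Ioi, ← intervalIntegral.integral_of_le hδ.le]
  simp [integral_pow]

lemma theta_int_one : ∫ _θ in Ioo (-π) π, (1:ℝ) = 2 * π := by
  simp only [integral_const, smul_eq_mul, mul_one, Measure.restrict_apply_univ, Real.volume_Ioo]
  rw [measureReal_restrict_apply_univ, Real.volume_real_Ioo_of_le (by linarith [pi_pos])]
  ring

lemma theta_int_sinplus : ∫ θ in Ioo (-π) π, max (sin θ) 0 = 2 := by
  have hneg : (-π : ℝ) ≤ π := by linarith [pi_pos]
  rw [← integral_Ioc_eq_integral_Ioo, ← intervalIntegral.integral_of_le hneg]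
  have h1 : ∫ θ in (-π)..0, max (sin θ) 0 = 0 := by
    rw [intervalIntegral.integral_congr (g := fun _ => (0:ℝ))]
    · simp
    · intro x hx
      rw [Set.uIcc_of_le (by linarith [pi_pos] : -π ≤ (0:ℝ))] at hx
      exact max_eq_right (Real.sin_nonpos_of_nonpos_of_neg_pi_le hx.2 hx.1)
  have h2 : ∫ θ in (0:ℝ)..π, max (sin θ) 0 = 2 := by
    rw [intervalIntegral.integral_congr (g := fun θ => sin θ)]
    · rw [integral_sin]; norm_num
    · intro x hx
      rw [Set.uIcc_of_le pi_nonneg] at hx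
      exact max_eq_left (Real.sin_nonneg_of_nonneg_of_le_pi hx.1 hx.2)
  have h := intervalIntegral.integral_add_adjacent_intervals
    (a := -π) (b := 0) (c := π) (f := fun θ => max (sin θ) 0)
    ((continuous_sin.max continuous_const).intervalIntegrable (μ := volume) _ _)
    ((continuous_sin.max continuous_const).intervalIntegrable (μ := volume) _ _)
  rw [h1, h2, zero_add] at h
  exact h.symm

lemma numer_plane (δ : ℝ) (hδ : 0 < δ) :
    ∫ p : ℝ × ℝ, Set.indicator {p : ℝ × ℝ | Real.sqrt (p.1^2 + p.2^2) ≤ δ}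
      (fun p => (p.1^2 + p.2^2) * max p.2 0) p = 2 * δ^5 / 5 := by
  rw [← integral_comp_polarCoord_symm]
  have hcongr : ∀ p ∈ polarCoord.target,
      p.1 • Set.indicator {p : ℝ × ℝ | Real.sqrt (p.1^2 + p.2^2) ≤ δ}
        (fun p => (p.1^2 + p.2^2) * max p.2 0) (polarCoord.symm p)
      = Set.indicator (Iic δ) (fun r => r^4) p.1 * max (sin p.2) 0 := by
    rintro ⟨r, θ⟩ ⟨hr, hθ⟩
    simp only [polarCoord_symm_apply] at *
    have hsq : (r * cos θ)^2 + (r * sin θ)^2 = r^2 := by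
      have := sin_sq_add_cos_sq θ; nlinarith
    have hr0 : (0:ℝ) < r := hr
    have hrt : Real.sqrt (r^2) = r := Real.sqrt_sq hr0.le
    rw [Set.indicator_apply, Set.indicator_apply]
    simp only [Set.mem_setOf_eq, Set.mem_Iic, hsq, hrt]
    by_cases hle : r ≤ δ
    · simp only [hle, if_true, smul_eq_mul]
      have hmm : max (r * sin θ) 0 = r * max (sin θ) 0 := by
        rw [mul_max_of_nonneg _ _ hr0.le, mul_zero]
      rw [hmm]; ring
    · simp [hle]
  rw [setIntegral_congr_fun (polarCoord.open_target.measurableSet) hcongr,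
    polarCoord_target, Measure.volume_eq_prod,
    setIntegral_prod_mul ((Iic δ).indicator fun r => r^4) (fun θ => max (sin θ) 0) _ _, r_int δ hδ 4, theta_int_sinplus]
  norm_num
  ring

lemma denom_plane (δ : ℝ) (hδ : 0 < δ) :
    ∫ p : ℝ × ℝ, Set.indicator {p : ℝ × ℝ | Real.sqrt (p.1^2 + p.2^2) ≤ δ}
      (fun p => p.1^2 + p.2^2) p = π * δ^4 / 2 := by
  rw [← integral_comp_polarCoord_symm]
  have hcongr : ∀ p ∈ polarCoord.target,
      p.1 • Set.indicator {p : ℝ × ℝ | Real.sqrt (p.1^2 + p.2^2) ≤ δ}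
        (fun p => p.1^2 + p.2^2) (polarCoord.symm p)
      = Set.indicator (Iic δ) (fun r => r^3) p.1 * (fun _ : ℝ => (1:ℝ)) p.2 := by
    rintro ⟨r, θ⟩ ⟨hr, hθ⟩
    simp only [polarCoord_symm_apply] at *
    have hsq : (r * cos θ)^2 + (r * sin θ)^2 = r^2 := by
      have := sin_sq_add_cos_sq θ; nlinarith
    have hr0 : (0:ℝ) < r := hr
    have hrt : Real.sqrt (r^2) = r := Real.sqrt_sq hr0.le
    rw [Set.indicator_apply, Set.indicator_apply]
    simp only [Set.mem_setOf_eq, Set.mem_Iic, hsq, hrt]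
    by_cases hle : r ≤ δ
    · simp only [hle, if_true, smul_eq_mul]; ring
    · simp [hle]
  rw [setIntegral_congr_fun (polarCoord.open_target.measurableSet) hcongr,
    polarCoord_target, Measure.volume_eq_prod,
    setIntegral_prod_mul ((Iic δ).indicator fun r => r^3) (fun _ => (1:ℝ)) _ _, r_int δ hδ 3, theta_int_one]
  norm_num
  ring

noncomputable abbrev phi2 : EuclideanSpace ℝ (Fin 2) ≃ᵐ ℝ × ℝ :=
  (MeasurableEquiv.toLp 2 (Fin 2 → ℝ)).symm.trans MeasurableEquiv.finTwoArrow

lemma phi2_mp : MeasurePreserving phi2 volume volume :=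
  (volume_preserving_finTwoArrow ℝ).comp (EuclideanSpace.volume_preserving_symm_measurableEquiv_toLp (Fin 2))

lemma phi2_apply (ξ : EuclideanSpace ℝ (Fin 2)) : phi2 ξ = (ξ 0, ξ 1) := rfl

lemma e2_norm_eq (ξ : EuclideanSpace ℝ (Fin 2)) : ‖ξ‖ = Real.sqrt ((ξ 0)^2 + (ξ 1)^2) := by
  rw [EuclideanSpace.norm_eq, Fin.sum_univ_two]
  simp [Real.norm_eq_abs, sq_abs]

lemma e2_norm_sq (ξ : EuclideanSpace ℝ (Fin 2)) : ‖ξ‖^2 = (ξ 0)^2 + (ξ 1)^2 := by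
  rw [e2_norm_eq, Real.sq_sqrt (by positivity)]

lemma e2_transfer (G : ℝ × ℝ → ℝ) :
    ∫ ξ : EuclideanSpace ℝ (Fin 2), G (ξ 0, ξ 1) = ∫ p : ℝ × ℝ, G p := by
  rw [← phi2_mp.integral_comp phi2.measurableEmbedding G]
  rfl

lemma cont_apply1 : Continuous (fun ξ : EuclideanSpace ℝ (Fin 2) => ξ 1) := by
  exact (continuous_apply 1).comp (PiLp.continuous_ofLp 2 _)

lemma denom_E2 (δ : ℝ) (hδ : 0 < δ) :
    ∫ ξ in {ξ : EuclideanSpace ℝ (Fin 2) | ‖ξ‖ ≤ δ}, ‖ξ‖^2 = π * δ^4 / 2 := by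
  rw [← integral_indicator ((isClosed_le continuous_norm continuous_const).measurableSet)]
  have heq : (fun ξ : EuclideanSpace ℝ (Fin 2) =>
      Set.indicator {ξ : EuclideanSpace ℝ (Fin 2) | ‖ξ‖ ≤ δ} (fun ξ => ‖ξ‖^2) ξ)
      = fun ξ => (fun p : ℝ × ℝ => Set.indicator {p : ℝ × ℝ | Real.sqrt (p.1^2 + p.2^2) ≤ δ}
          (fun p => p.1^2 + p.2^2) p) (ξ 0, ξ 1) := by
    funext ξ
    simp only [Set.indicator_apply, Set.mem_setOf_eq, ← e2_norm_eq, e2_norm_sq]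
  rw [heq, e2_transfer, denom_plane δ hδ]

lemma numer_E2 (δ : ℝ) (hδ : 0 < δ) :
    ∫ ξ : EuclideanSpace ℝ (Fin 2),
      Set.indicator {ξ : EuclideanSpace ℝ (Fin 2) | ‖ξ‖ ≤ δ}
        (fun ξ => ‖ξ‖^2 * max (ξ 1) 0) ξ = 2 * δ^5 / 5 := by
  have heq : (fun ξ : EuclideanSpace ℝ (Fin 2) =>
      Set.indicator {ξ : EuclideanSpace ℝ (Fin 2) | ‖ξ‖ ≤ δ} (fun ξ => ‖ξ‖^2 * max (ξ 1) 0) ξ)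
      = fun ξ => (fun p : ℝ × ℝ => Set.indicator {p : ℝ × ℝ | Real.sqrt (p.1^2 + p.2^2) ≤ δ}
          (fun p => (p.1^2 + p.2^2) * max p.2 0) p) (ξ 0, ξ 1) := by
    funext ξ
    simp only [Set.indicator_apply, Set.mem_setOf_eq, ← e2_norm_eq, e2_norm_sq]
  rw [heq, e2_transfer, numer_plane δ hδ]

lemma abs_coord_le (ξ : EuclideanSpace ℝ (Fin 2)) : ξ 1 ≤ ‖ξ‖ := by
  nlinarith [e2_norm_sq ξ, norm_nonneg ξ, sq_nonneg (ξ 0)]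

lemma key_swap (δ : ℝ) (hδ : 0 < δ) :
    ∫ z in (0:ℝ)..δ,
      (∫ ξ in {ξ : EuclideanSpace ℝ (Fin 2) | ‖ξ‖ ≤ δ ∧ z ≤ ξ 1}, ‖ξ‖ ^ 2)
      = 2 * δ^5 / 5 := by
  classical
  set C : Set (ℝ × EuclideanSpace ℝ (Fin 2)) := {q | ‖q.2‖ ≤ δ ∧ q.1 ≤ q.2 1} with hCdef
  have hCclosed : IsClosed C := by
    apply IsClosed.inter
    · exact isClosed_le (continuous_norm.comp continuous_snd) continuous_const
    · exact isClosed_le continuous_fst (cont_apply1.comp continuous_snd)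
  have hC : MeasurableSet C := hCclosed.measurableSet
  set F : ℝ → EuclideanSpace ℝ (Fin 2) → ℝ :=
    fun z ξ => Set.indicator C (fun q => ‖q.2‖^2) (z, ξ) with hFdef
  -- step 1 : rewrite inner set integrals
  have hstep1 : ∀ z : ℝ, (∫ ξ in {ξ : EuclideanSpace ℝ (Fin 2) | ‖ξ‖ ≤ δ ∧ z ≤ ξ 1}, ‖ξ‖ ^ 2)
      = ∫ ξ, F z ξ := by
    intro z
    have hSz : MeasurableSet {ξ : EuclideanSpace ℝ (Fin 2) | ‖ξ‖ ≤ δ ∧ z ≤ ξ 1} := by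
      apply IsClosed.measurableSet
      exact (isClosed_le continuous_norm continuous_const).inter
        (isClosed_le continuous_const cont_apply1)
    rw [← integral_indicator hSz]
    rfl
  -- integrability for Fubini
  have hint : Integrable (Function.uncurry F)
      ((volume.restrict (Set.Ioc (0:ℝ) δ)).prod volume) := by
    have hmeas : Measurable (Function.uncurry F) := by
      have : Function.uncurry F = Set.indicator C (fun q => ‖q.2‖^2) := by
        funext q; rfl
      rw [this]
      exact (measurable_snd.norm.pow_const 2).indicator hC
    apply Integrable.mono'
      (g := Set.indicator (Set.univ ×ˢ Metric.closedBall (0 : EuclideanSpace ℝ (Fin 2)) δ)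
        (fun _ => δ^2))
    · rw [integrable_indicator_iff (MeasurableSet.univ.prod measurableSet_closedBall)]
      apply (integrableOn_const_iff).mpr
      right
      rw [Measure.prod_prod, Measure.restrict_apply_univ, Real.volume_Ioc]
      exact ENNReal.mul_lt_top ENNReal.ofReal_lt_top measure_closedBall_lt_top
    · exact hmeas.aestronglyMeasurable
    · filter_upwards with q
      by_cases hq : q ∈ C
      · have h1 : Function.uncurry F q = ‖q.2‖^2 := by
          show Set.indicator C (fun q => ‖q.2‖^2) q = _
          rw [Set.indicator_of_mem hq]
        have h2 : q ∈ Set.univ ×ˢ Metric.closedBall (0 : EuclideanSpace ℝ (Fin 2)) δ := by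
          refine ⟨Set.mem_univ _, ?_⟩
          rw [Metric.mem_closedBall, dist_zero_right]
          exact hq.1
        rw [h1, Set.indicator_of_mem h2]
        rw [Real.norm_eq_abs, abs_of_nonneg (by positivity)]
        have := hq.1
        nlinarith [norm_nonneg q.2]
      · have h1 : Function.uncurry F q = 0 := by
          show Set.indicator C (fun q => ‖q.2‖^2) q = _
          rw [Set.indicator_of_notMem hq]
        rw [h1, norm_zero]
        apply Set.indicator_apply_nonneg
        intro _; positivity
  -- inner z-integral
  have hstep3 : ∀ ξ : EuclideanSpace ℝ (Fin 2),
      (∫ z in Set.Ioc (0:ℝ) δ, F z ξ)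
      = Set.indicator {ξ : EuclideanSpace ℝ (Fin 2) | ‖ξ‖ ≤ δ}
          (fun ξ => ‖ξ‖^2 * max (ξ 1) 0) ξ := by
    intro ξ
    by_cases hξ : ‖ξ‖ ≤ δ
    · have hF : ∀ z, F z ξ = Set.indicator (Set.Iic (ξ 1)) (fun _ => ‖ξ‖^2) z := by
        intro z
        simp only [hFdef, Set.indicator_apply, hCdef, Set.mem_setOf_eq, Set.mem_Iic, hξ, true_and]
      simp only [hF]
      rw [integral_indicator measurableSet_Iic,
        Measure.restrict_restrict measurableSet_Iic, setIntegral_const]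
      have hinter : Set.Iic (ξ 1) ∩ Set.Ioc 0 δ = Set.Ioc 0 (min (ξ 1) δ) := by
        rw [Set.inter_comm, Set.Ioc_inter_Iic, min_comm]
      have hmin : min (ξ 1) δ = ξ 1 := min_eq_left ((abs_coord_le ξ).trans hξ)
      rw [hinter, hmin, Real.volume_real_Ioc,
        Set.indicator_of_mem (show ξ ∈ {ξ : EuclideanSpace ℝ (Fin 2) | ‖ξ‖ ≤ δ} from hξ)]
      rw [sub_zero]
      simp [smul_eq_mul, mul_comm]
    · have hF : ∀ z, F z ξ = 0 := by
        intro z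
        apply Set.indicator_of_notMem
        simp only [hCdef, Set.mem_setOf_eq]
        tauto
      simp only [hF, integral_zero]
      rw [Set.indicator_of_notMem
        (show ξ ∉ {ξ : EuclideanSpace ℝ (Fin 2) | ‖ξ‖ ≤ δ} from hξ)]
  -- assemble
  rw [intervalIntegral.integral_of_le hδ.le]
  calc ∫ z in Set.Ioc (0:ℝ) δ,
        (∫ ξ in {ξ : EuclideanSpace ℝ (Fin 2) | ‖ξ‖ ≤ δ ∧ z ≤ ξ 1}, ‖ξ‖ ^ 2)
      = ∫ z in Set.Ioc (0:ℝ) δ, ∫ ξ, F z ξ := by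
        apply setIntegral_congr_fun measurableSet_Ioc
        intro z _
        exact hstep1 z
    _ = ∫ ξ, ∫ z in Set.Ioc (0:ℝ) δ, F z ξ := integral_integral_swap hint
    _ = ∫ ξ : EuclideanSpace ℝ (Fin 2),
          Set.indicator {ξ : EuclideanSpace ℝ (Fin 2) | ‖ξ‖ ≤ δ}
            (fun ξ => ‖ξ‖^2 * max (ξ 1) 0) ξ := by
        exact integral_congr_ae (Filter.Eventually.of_forall hstep3)
    _ = 2 * δ^5 / 5 := numer_E2 δ hδ

theorem beta_prime_2d (δ : ℝ) (hδ : 0 < δ) :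
    (∫ z in (0:ℝ)..δ,
      (∫ ξ in {ξ : EuclideanSpace ℝ (Fin 2) | ‖ξ‖ ≤ δ ∧ z ≤ ξ 1}, ‖ξ‖ ^ 2) /
        (∫ ξ in {ξ : EuclideanSpace ℝ (Fin 2) | ‖ξ‖ ≤ δ}, ‖ξ‖ ^ 2))
      = 4 * δ / (5 * π) := by
  rw [show (∫ ξ in {ξ : EuclideanSpace ℝ (Fin 2) | ‖ξ‖ ≤ δ}, ‖ξ‖ ^ 2) = π * δ^4 / 2
    from denom_E2 δ hδ]
  rw [intervalIntegral.integral_div, key_swap δ hδ]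
  have hπ := pi_pos
  field_simp
  ring
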